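/- Let X be a compact metric space and let A be a residually stably finite unital C*-algebra. Then the C*-algebra C(X, A) of continuous A-valued functions on X is residually stably finite. -/

import Mathlib

/-- A unital *-ring is *finite* if `x* x = 1` implies `x x* = 1`. -/
def IsFiniteStarRing (D : Type*) [Ring D] [StarRing D] : Prop :=
  ∀ x : D, star x * x = 1 → x * star x = 1

/-- A unital *-ring is *stably finite* if every matrix algebra `Mₙ(D)` (`n ≥ 1`) is finite. -/
def IsStablyFinite (D : Type*) [Ring D] [StarRing D] : Prop :=
  ∀ n : ℕ, 1 ≤ n → IsFiniteStarRing (Matrix (Fin n) (Fin n) D)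

/-- The quotient of `D` by the two-sided ideal `I` is stably finite.  This is expressed without
constructing the quotient: `Mₙ(D)/Mₙ(I) ≅ Mₙ(D/I)` is finite iff whenever `x* x ≡ 1 (mod Mₙ(I))`
then `x x* ≡ 1 (mod Mₙ(I))`, where `Mₙ(I)` consists of the matrices all of whose entries
lie in `I`. -/
def QuotientIsStablyFinite (D : Type*) [Ring D] [StarRing D] (I : TwoSidedIdeal D) : Prop :=
  ∀ n : ℕ, 1 ≤ n → ∀ x : Matrix (Fin n) (Fin n) D,
    (∀ i j, (star x * x - 1) i j ∈ I) → (∀ i j, (x * star x - 1) i j ∈ I)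

/-- A unital C*-algebra is *residually stably finite* if its quotient by every closed two-sided
ideal is stably finite. -/
def IsResiduallyStablyFinite (D : Type*) [Ring D] [StarRing D] [TopologicalSpace D] : Prop :=
  ∀ I : TwoSidedIdeal D, IsClosed (I : Set D) → QuotientIsStablyFinite D I

open Set Function

section Aux

variable {X A : Type*} [MetricSpace X] [CompactSpace X] [CStarAlgebra A]

/-- Evaluation at a point, as a ring homomorphism `C(X, A) →+* A`. -/
def cmEvalRingHom (p : X) : C(X, A) →+* A where
  toFun g := g p
  map_one' := rfl
  map_mul' _ _ := rfl
  map_zero' := rfl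
  map_add' _ _ := rfl

/-- The closed two-sided ideal of `A` obtained by evaluating a closed two-sided ideal of
`C(X, A)` at a point and taking the closure. -/
def evalIdeal (I : TwoSidedIdeal C(X, A)) (p : X) : TwoSidedIdeal A :=
  TwoSidedIdeal.mk' (closure ((fun g : C(X, A) => g p) '' I))
    (subset_closure ⟨0, I.zero_mem, rfl⟩)
    (fun {a b} ha hb => map_mem_closure₂ continuous_add ha hb
      (by rintro x ⟨g, hg, rfl⟩ y ⟨h, hh, rfl⟩; exact ⟨g + h, I.add_mem hg hh, rfl⟩))
    (fun {a} ha => map_mem_closure continuous_neg ha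
      (by rintro x ⟨g, hg, rfl⟩; exact ⟨-g, I.neg_mem hg, rfl⟩))
    (fun {a b} hb => map_mem_closure (continuous_mul_left a) hb
      (by rintro x ⟨g, hg, rfl⟩
          exact ⟨ContinuousMap.const X a * g, I.mul_mem_left _ _ hg, rfl⟩))
    (fun {a b} ha => map_mem_closure (f := fun z => z * b) (continuous_mul_right b) ha
      (by rintro x ⟨g, hg, rfl⟩
          exact ⟨g * ContinuousMap.const X b, I.mul_mem_right _ _ hg, rfl⟩))

lemma mem_evalIdeal_iff {I : TwoSidedIdeal C(X, A)} {p : X} {a : A} :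
    a ∈ evalIdeal I p ↔ a ∈ closure ((fun g : C(X, A) => g p) '' I) := by
  simp [evalIdeal]

lemma isClosed_evalIdeal (I : TwoSidedIdeal C(X, A)) (p : X) :
    IsClosed ((evalIdeal I p : Set A)) := by
  rw [evalIdeal, TwoSidedIdeal.coe_mk']; exact isClosed_closure

/-- Partition-of-unity argument: a continuous function all of whose values lie in the pointwise
closures of a closed two-sided ideal belongs to the ideal. -/
lemma mem_of_forall_eval_mem (I : TwoSidedIdeal C(X, A)) (hI : IsClosed (I : Set C(X, A)))
    (f : C(X, A)) (hf : ∀ p : X, f p ∈ closure ((fun g : C(X, A) => g p) '' I)) :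
    f ∈ I := by
  have hcl : f ∈ closure (I : Set C(X, A)) := by
    rw [Metric.mem_closure_iff]
    intro ε hε
    have key : ∀ p : X, ∃ g : C(X, A), g ∈ I ∧ ‖f p - g p‖ < ε / 2 := by
      intro p
      have h := hf p
      rw [Metric.mem_closure_iff] at h
      obtain ⟨a, ⟨g, hg, rfl⟩, hd⟩ := h (ε / 2) (by positivity)
      exact ⟨g, hg, by rwa [← dist_eq_norm]⟩
    choose g hgI hg using key
    set U : X → Set X := fun p => {q | ‖f q - (g p) q‖ < ε / 2} with hUdef
    have hUo : ∀ p, IsOpen (U p) := fun p =>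
      isOpen_lt ((f.continuous.sub (g p).continuous).norm) continuous_const
    obtain ⟨t, ht⟩ := isCompact_univ.elim_finite_subcover U hUo
      (fun q _ => mem_iUnion.2 ⟨q, hg q⟩)
    obtain ⟨φ, hφ⟩ := PartitionOfUnity.exists_isSubordinate (ι := ↥t) (X := X) isClosed_univ
      (fun i => U i) (fun i => hUo i)
      (by intro q hq
          obtain ⟨p, hp, hqp⟩ := mem_iUnion₂.1 (ht hq)
          exact mem_iUnion.2 ⟨⟨p, hp⟩, hqp⟩)
    set c : ↥t → C(X, A) := fun i =>
      ⟨fun q => (φ i q : ℝ) • (1 : A), ((φ i).continuous.smul continuous_const)⟩ with hcdef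
    set h : C(X, A) := ∑ i : ↥t, c i * g i with hhdef
    have hhI : h ∈ I := by
      exact sum_mem (fun i _ => I.mul_mem_left _ _ (hgI i))
    refine ⟨h, hhI, ?_⟩
    have hsum1 : ∀ q : X, ∑ i : ↥t, φ i q = 1 := by
      intro q
      have := φ.sum_eq_one (mem_univ q)
      rwa [finsum_eq_sum_of_fintype] at this
    have hdle : dist f h ≤ ε / 2 := by
      rw [ContinuousMap.dist_le (by positivity)]
      intro q
      rw [dist_eq_norm]
      have hq : f q - h q = ∑ i : ↥t, φ i q • (f q - (g i) q) := by
        have hhq : h q = ∑ i : ↥t, φ i q • (g i) q := by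
          rw [hhdef]
          simp only [ContinuousMap.coe_sum, Finset.sum_apply, ContinuousMap.mul_apply]
          refine Finset.sum_congr rfl fun i _ => ?_
          show ((φ i q : ℝ) • (1 : A)) * (g i) q = _
          rw [smul_mul_assoc, one_mul]
        rw [hhq]
        rw [Finset.sum_congr rfl (fun i _ => smul_sub (φ i q) (f q) ((g i) q))]
        rw [Finset.sum_sub_distrib, ← Finset.sum_smul, hsum1, one_smul]
      rw [hq]
      calc ‖∑ i : ↥t, φ i q • (f q - (g i) q)‖
          ≤ ∑ i : ↥t, ‖φ i q • (f q - (g i) q)‖ := norm_sum_le _ _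
        _ ≤ ∑ i : ↥t, φ i q * (ε / 2) := by
            refine Finset.sum_le_sum fun i _ => ?_
            rw [norm_smul, Real.norm_eq_abs, abs_of_nonneg (φ.nonneg i q)]
            by_cases h0 : φ i q = 0
            · simp [h0]
            · refine mul_le_mul_of_nonneg_left ?_ (φ.nonneg i q)
              have hqU : q ∈ U i := hφ i (subset_closure (by simpa using h0))
              exact le_of_lt hqU
        _ = ε / 2 := by rw [← Finset.sum_mul, hsum1, one_mul]
    exact lt_of_le_of_lt hdle (by linarith)
  rwa [hI.closure_eq] at hcl

end Aux


/-- If `X` is a compact metric space and `A` is a residually stably finite unital C*-algebra,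
then the C*-algebra `C(X, A)` of continuous `A`-valued functions on `X` is residually
stably finite. -/
theorem residuallyStablyFinite_continuousMap (X : Type*) [MetricSpace X] [CompactSpace X]
    (A : Type*) [CStarAlgebra A] (hA : IsResiduallyStablyFinite A) :
    IsResiduallyStablyFinite C(X, A) := by
  intro I hI n hn x hx i j
  apply mem_of_forall_eval_mem I hI
  intro p
  set E : C(X, A) →+* A := cmEvalRingHom p with hE
  set Φ : Matrix (Fin n) (Fin n) C(X, A) →+* Matrix (Fin n) (Fin n) A := E.mapMatrix with hΦ
  have hstar : ∀ M : Matrix (Fin n) (Fin n) C(X, A), Φ (star M) = star (Φ M) := by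
    intro M
    ext a b
    simp [hΦ, RingHom.mapMatrix_apply, Matrix.map_apply, Matrix.star_apply, hE, cmEvalRingHom]
    rfl
  have h1 : ∀ a b, (star (Φ x) * Φ x - 1) a b ∈ evalIdeal I p := by
    intro a b
    have heq : star (Φ x) * Φ x - 1 = Φ (star x * x - 1) := by
      rw [map_sub, map_mul, map_one, hstar]
    rw [heq, mem_evalIdeal_iff]
    exact subset_closure ⟨(star x * x - 1) a b, hx a b, rfl⟩
  have h2 := hA (evalIdeal I p) (isClosed_evalIdeal I p) n hn (Φ x) h1 i j
  have heq : Φ x * star (Φ x) - 1 = Φ (x * star x - 1) := by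
    rw [map_sub, map_mul, map_one, hstar]
  rw [heq, mem_evalIdeal_iff] at h2
  exact h2
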